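/- Let x, y be nonnegative integer vectors with common sum M \ge 1 and B(x,y) > 0. If the output edge-sequence distribution \pi of the sequential sampling algorithm assigns to each complete sequence (f_1,...,f_M) \in S(x,y), conditionally on its first t-1 entries, the probability \prod_{r=t}^{M} p(f_r | {f_1,...,f_{r-1}}) \cdot \prod (normalizing factors 1/(x_i - j + 1) for the remaining slots), then this conditional probability equals 1 / ( |{G with degree sequence (x,y) : {f_1,...,f_{t-1}} \subseteq G}| \cdot (x_i - j + 1)! \cdot \prod_{l > i} x_l! ), where step t processes vertex v_i at its j-th slot. In particular \pi is the uniform distribution on S(x,y). -/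

import Mathlib

open Finset

/-- Degree-sequence predicate for bipartite graphs on parts `(Fin n, Fin m)`. -/
def BipDeg {n m : ℕ} (G : Finset (Fin n × Fin m)) (x : Fin n → ℕ) (y : Fin m → ℕ) :
    Prop :=
  (∀ v, (G.filter fun p => p.1 = v).card = x v) ∧
    (∀ u, (G.filter fun p => p.2 = u).card = y u)

/-- The conditional probability `p(f | H)`: `0` if `f ∈ H`, otherwise the probability
that a uniformly random graph with degree sequence `(x,y)` containing `H` contains `f`. -/
noncomputable def pcond {n m : ℕ} (x : Fin n → ℕ) (y : Fin m → ℕ)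
    (H : Finset (Fin n × Fin m)) (f : Fin n × Fin m) : ℝ :=
  if f ∈ H then 0
  else (Nat.card {G : Finset (Fin n × Fin m) // BipDeg G x y ∧ insert f H ⊆ G} : ℝ) /
    (Nat.card {G : Finset (Fin n × Fin m) // BipDeg G x y ∧ H ⊆ G} : ℝ)

/-- Membership of an edge sequence in `S(x,y)`: the edges incident with vertex `i` of
some graph with degree sequence `(x,y)` form the `i`-th consecutive block. -/
def InS {n m M : ℕ} (x : Fin n → ℕ) (y : Fin m → ℕ) (f : Fin M → Fin n × Fin m) :
    Prop :=
  ∃ G : Finset (Fin n × Fin m), BipDeg G x y ∧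
    ∀ i : Fin n, G.filter (fun p => p.1 = i) =
      (Finset.univ.filter fun t : Fin M =>
        ∑ l ∈ Finset.Iio i, x l ≤ (t : ℕ) ∧ (t : ℕ) < ∑ l ∈ Finset.Iic i, x l).image f

section Aux

variable {n m M : ℕ} (x : Fin n → ℕ) (y : Fin m → ℕ)

/-- the `i`-th block of indices -/
def Iblock (i : Fin n) : Finset (Fin M) :=
  Finset.univ.filter fun t : Fin M =>
    ∑ l ∈ Finset.Iio i, x l ≤ (t : ℕ) ∧ (t : ℕ) < ∑ l ∈ Finset.Iic i, x l

lemma sum_Iic (i : Fin n) : ∑ l ∈ Iic i, x l = x i + ∑ l ∈ Iio i, x l := by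
  rw [← Finset.Iio_insert, Finset.sum_insert (by simp)]

lemma card_of_bipdeg (G : Finset (Fin n × Fin m)) (h : BipDeg G x y)
    (hx : ∑ i, x i = M) : G.card = M := by
  classical
  rw [Finset.card_eq_sum_card_fiberwise (f := Prod.fst) (t := Finset.univ) (fun a _ => mem_univ _)]
  rw [← hx]
  exact Finset.sum_congr rfl fun v _ => h.1 v

lemma mem_Iblock_iff (i : Fin n) (t : Fin M) :
    t ∈ Iblock (M := M) x i ↔ ∑ l ∈ Finset.Iio i, x l ≤ (t : ℕ) ∧ (t : ℕ) < ∑ l ∈ Finset.Iic i, x l := by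
  simp [Iblock]

lemma Iblock_unique {i i' : Fin n} {t : Fin M} (h : t ∈ Iblock (M := M) x i)
    (h' : t ∈ Iblock (M := M) x i') : i = i' := by
  rw [mem_Iblock_iff] at h h'
  by_contra hne
  rcases lt_or_gt_of_ne hne with hlt | hlt
  · have hsub : Finset.Iic i ⊆ Finset.Iio i' := fun l hl =>
      Finset.mem_Iio.2 (lt_of_le_of_lt (Finset.mem_Iic.1 hl) hlt)
    have := Finset.sum_le_sum_of_subset (f := x) hsub
    omega
  · have hsub : Finset.Iic i' ⊆ Finset.Iio i := fun l hl =>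
      Finset.mem_Iio.2 (lt_of_le_of_lt (Finset.mem_Iic.1 hl) hlt)
    have := Finset.sum_le_sum_of_subset (f := x) hsub
    omega

lemma filter_lt_eq_Iio (i : Fin n) :
    (Finset.univ.filter fun l : Fin n => (l : ℕ) < (i : ℕ)) = Finset.Iio i := by
  ext l
  simp only [Finset.mem_filter, Finset.mem_univ, true_and, Finset.mem_Iio, Fin.lt_def]

lemma filter_lt_succ_eq_Iic (i : Fin n) :
    (Finset.univ.filter fun l : Fin n => (l : ℕ) < (i : ℕ) + 1) = Finset.Iic i := by
  ext l
  simp only [Finset.mem_filter, Finset.mem_univ, true_and, Finset.mem_Iic, Fin.le_def,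
    Nat.lt_succ_iff]

lemma blocks_cover (hx : ∑ i, x i = M) (t : Fin M) : ∃! i : Fin n, t ∈ Iblock (M := M) x i := by
  classical
  set S : ℕ → ℕ := fun k => ∑ l ∈ Finset.univ.filter (fun l : Fin n => (l : ℕ) < k), x l with hS
  have hS0 : S 0 ≤ (t : ℕ) := by simp [hS]
  have hSn : S n = M := by
    rw [← hx]
    simp only [hS]
    rw [Finset.filter_true_of_mem (fun l _ => l.isLt)]
  have htM : (t : ℕ) < M := t.isLt
  set k := Nat.findGreatest (fun k => S k ≤ (t : ℕ)) n with hk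
  have hk1 : S k ≤ (t : ℕ) :=
    Nat.findGreatest_spec (P := fun k => S k ≤ (t : ℕ)) (Nat.zero_le n) hS0
  have hkn : k < n := by
    rcases lt_or_eq_of_le (Nat.findGreatest_le (P := fun k => S k ≤ (t : ℕ)) n) with h | h
    · exact h
    · exfalso; rw [hk, h] at hk1; omega
  have hk2 : ¬ S (k + 1) ≤ (t : ℕ) := by
    intro hcon
    have := Nat.le_findGreatest (P := fun k => S k ≤ (t : ℕ)) (Nat.succ_le_of_lt hkn) hcon
    omega
  have e1 : ∑ l ∈ Finset.Iio (⟨k, hkn⟩ : Fin n), x l = S k := by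
    rw [← filter_lt_eq_Iio]
  have e2 : ∑ l ∈ Finset.Iic (⟨k, hkn⟩ : Fin n), x l = S (k + 1) := by
    rw [← filter_lt_succ_eq_Iic]
  have hmem : t ∈ Iblock (M := M) x ⟨k, hkn⟩ := by
    rw [mem_Iblock_iff, e1, e2]
    exact ⟨hk1, by omega⟩
  exact ⟨⟨k, hkn⟩, hmem, fun i' hi' => Iblock_unique x hi' hmem⟩

lemma image_univ_eq (hx : ∑ i, x i = M) (g : Fin M → Fin n × Fin m)
    (G : Finset (Fin n × Fin m))
    (h : ∀ i : Fin n, G.filter (fun p => p.1 = i) = (Iblock (M := M) x i).image g) :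
    Finset.univ.image g = G := by
  classical
  apply Finset.Subset.antisymm
  · intro p hp
    simp only [Finset.mem_image, Finset.mem_univ, true_and] at hp
    obtain ⟨a, rfl⟩ := hp
    obtain ⟨i, hi, -⟩ := blocks_cover x hx a
    have : g a ∈ (Iblock (M := M) x i).image g := Finset.mem_image_of_mem g hi
    rw [← h i] at this
    exact (Finset.mem_filter.1 this).1
  · intro p hp
    have : p ∈ G.filter (fun q => q.1 = p.1) := Finset.mem_filter.2 ⟨hp, rfl⟩
    rw [h p.1] at this
    obtain ⟨a, -, rfl⟩ := Finset.mem_image.1 this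
    exact Finset.mem_image_of_mem g (mem_univ a)

lemma inS_injective (hx : ∑ i, x i = M) (g : Fin M → Fin n × Fin m)
    (G : Finset (Fin n × Fin m)) (hG : BipDeg G x y)
    (h : ∀ i : Fin n, G.filter (fun p => p.1 = i) = (Iblock (M := M) x i).image g) :
    Function.Injective g := by
  classical
  have h1 : Finset.univ.image g = G := image_univ_eq x hx g G h
  have h2 : (Finset.univ.image g).card = (Finset.univ : Finset (Fin M)).card := by
    rw [h1, card_of_bipdeg x y G hG hx]; simp
  have := (Finset.card_image_iff).1 h2
  intro a b hab
  exact this (mem_coe.2 (mem_univ a)) (mem_coe.2 (mem_univ b)) hab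

lemma card_Iblock (hx : ∑ i, x i = M) (i : Fin n) : (Iblock (M := M) x i).card = x i := by
  classical
  have hbM : ∑ l ∈ Finset.Iic i, x l ≤ M := by
    rw [← hx]; exact Finset.sum_le_sum_of_subset (Finset.subset_univ _)
  have himg : (Iblock (M := M) x i).image (Fin.val) =
      Finset.Ico (∑ l ∈ Finset.Iio i, x l) (∑ l ∈ Finset.Iic i, x l) := by
    ext c
    simp only [Finset.mem_image, Finset.mem_Ico, mem_Iblock_iff]
    constructor
    · rintro ⟨a, ha, rfl⟩; exact ha
    · rintro ⟨h1, h2⟩; exact ⟨⟨c, lt_of_lt_of_le h2 hbM⟩, ⟨h1, h2⟩, rfl⟩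
  have := Finset.card_image_of_injective (Iblock (M := M) x i) (Fin.val_injective)
  rw [himg, Nat.card_Ico, sum_Iic] at this
  omega

/-- counting functions with prescribed images on a partition -/
lemma aux_count {ι α β : Type*} [Fintype ι] [Fintype α] [DecidableEq α] [DecidableEq β]
    (I : ι → Finset α) (A : ι → Finset β)
    (hcover : ∀ a : α, ∃! i, a ∈ I i)
    (hcard : ∀ i, (I i).card = (A i).card) :
    Nat.card {g : α → β // ∀ i, (I i).image g = A i} = ∏ i, ((I i).card).factorial := by
  classical
  set idx : α → ι := fun a => (hcover a).choose with hidx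
  have hidxmem : ∀ a, a ∈ I (idx a) := fun a => (hcover a).choose_spec.1
  have fwd_mem : ∀ (g : {g : α → β // ∀ i, (I i).image g = A i}) (i : ι) (a : ↥(I i)),
      g.1 ↑a ∈ A i := by
    intro g i a; rw [← g.2 i]; exact Finset.mem_image_of_mem _ a.2
  have fwd_bij : ∀ g i,
      Function.Bijective (fun a : ↥(I i) => (⟨g.1 ↑a, fwd_mem g i a⟩ : ↥(A i))) := by
    intro g i
    rw [Fintype.bijective_iff_surjective_and_card]
    constructor
    · rintro ⟨b, hb⟩
      rw [← g.2 i] at hb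
      obtain ⟨a, ha, hab⟩ := Finset.mem_image.1 hb
      exact ⟨⟨a, ha⟩, Subtype.ext hab⟩
    · simp [hcard i]
  set F : {g : α → β // ∀ i, (I i).image g = A i} → (∀ i, ↥(I i) ≃ ↥(A i)) :=
    fun g i => Equiv.ofBijective _ (fwd_bij g i) with hF
  have gdef : ∀ (e : ∀ i, ↥(I i) ≃ ↥(A i)) (i : ι) (a : α) (h : a ∈ I i),
      (↑(e (idx a) ⟨a, hidxmem a⟩) : β) = ↑(e i ⟨a, h⟩) := by
    intro e i a h
    obtain rfl : i = idx a := (hcover a).choose_spec.2 i h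
    rfl
  have Finj : Function.Injective F := by
    intro g g' hgg
    refine Subtype.ext (funext fun a => ?_)
    have := congrArg (fun e => ((e (idx a) ⟨a, hidxmem a⟩ : ↥(A (idx a))) : β)) hgg
    simpa [hF, Equiv.ofBijective] using this
  have Fsurj : Function.Surjective F := by
    intro e
    refine ⟨⟨fun a => (↑(e (idx a) ⟨a, hidxmem a⟩) : β), ?_⟩, ?_⟩
    · intro i
      ext b
      simp only [Finset.mem_image]
      constructor
      · rintro ⟨a, ha, rfl⟩
        rw [gdef e i a ha]
        exact (e i ⟨a, ha⟩).2
      · intro hb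
        refine ⟨↑((e i).symm ⟨b, hb⟩), ((e i).symm ⟨b, hb⟩).2, ?_⟩
        rw [gdef e i _ ((e i).symm ⟨b, hb⟩).2]
        simp
    · funext i
      refine Equiv.ext fun a => Subtype.ext ?_
      show (↑(e (idx ↑a) ⟨↑a, hidxmem ↑a⟩) : β) = ↑(e i a)
      rw [gdef e i ↑a a.2]
  rw [Nat.card_congr (Equiv.ofBijective F ⟨Finj, Fsurj⟩), Nat.card_eq_fintype_card,
    Fintype.card_pi]
  refine Finset.prod_congr rfl fun i _ => ?_
  rw [Fintype.card_equiv (Fintype.equivOfCardEq (by simp [hcard i]))]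
  simp

lemma telescope (hx : ∑ i, x i = M) (f : Fin M → Fin n × Fin m)
    (G₀ : Finset (Fin n × Fin m)) (hG₀ : BipDeg G₀ x y)
    (hbl : ∀ i : Fin n, G₀.filter (fun p => p.1 = i) = (Iblock (M := M) x i).image f) :
    ∀ d s, s + d = M →
      (∏ r ∈ Finset.univ.filter (fun r : Fin M => s ≤ (r : ℕ)),
          pcond x y ((Finset.univ.filter fun q : Fin M => (q : ℕ) < (r : ℕ)).image f)
            (f r)) *
        (Nat.card {G : Finset (Fin n × Fin m) // BipDeg G x y ∧
            (Finset.univ.filter fun q : Fin M => (q : ℕ) < s).image f ⊆ G} : ℝ) = 1 := by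
  classical
  have hinj : Function.Injective f := inS_injective x y hx f G₀ hG₀ hbl
  have himg : Finset.univ.image f = G₀ := image_univ_eq x hx f G₀ hbl
  have hsub : ∀ s : ℕ, (Finset.univ.filter fun q : Fin M => (q : ℕ) < s).image f ⊆ G₀ :=
    fun s => by
      rw [← himg]
      exact Finset.image_subset_image (Finset.filter_subset _ _)
  have hpos : ∀ s : ℕ, 0 < Nat.card {G : Finset (Fin n × Fin m) // BipDeg G x y ∧
      (Finset.univ.filter fun q : Fin M => (q : ℕ) < s).image f ⊆ G} := by
    intro s
    have : Nonempty {G : Finset (Fin n × Fin m) // BipDeg G x y ∧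
        (Finset.univ.filter fun q : Fin M => (q : ℕ) < s).image f ⊆ G} :=
      ⟨⟨G₀, hG₀, hsub s⟩⟩
    exact Nat.card_pos
  intro d
  induction d with
  | zero =>
    intro s hs
    have h1 : (Finset.univ.filter (fun r : Fin M => s ≤ (r : ℕ))) = ∅ := by
      apply Finset.filter_false_of_mem
      intro r _
      have := r.isLt
      omega
    have h2 : (Finset.univ.filter fun q : Fin M => (q : ℕ) < s) = Finset.univ := by
      apply Finset.filter_true_of_mem
      intro r _
      have := r.isLt
      omega
    rw [h1, h2, Finset.prod_empty, one_mul, himg]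
    have : Nat.card {G : Finset (Fin n × Fin m) // BipDeg G x y ∧ G₀ ⊆ G} = 1 := by
      rw [Nat.card_eq_one_iff_unique]
      constructor
      · constructor
        intro ⟨G, hG, hGsub⟩ ⟨G', hG', hGsub'⟩
        have e1 : G₀ = G := Finset.eq_of_subset_of_card_le hGsub
          (by rw [card_of_bipdeg x y G hG hx, card_of_bipdeg x y G₀ hG₀ hx])
        have e2 : G₀ = G' := Finset.eq_of_subset_of_card_le hGsub'
          (by rw [card_of_bipdeg x y G' hG' hx, card_of_bipdeg x y G₀ hG₀ hx])
        exact Subtype.ext (e1 ▸ e2 ▸ rfl)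
      · exact ⟨⟨G₀, hG₀, Finset.Subset.refl _⟩⟩
    rw [this, Nat.cast_one]
  | succ d ih =>
    intro s hs
    have hsM : s < M := by omega
    have hins : (Finset.univ.filter (fun r : Fin M => s ≤ (r : ℕ))) =
        insert ⟨s, hsM⟩ (Finset.univ.filter (fun r : Fin M => s + 1 ≤ (r : ℕ))) := by
      ext r
      simp only [Finset.mem_filter, Finset.mem_univ, true_and, Finset.mem_insert, Fin.ext_iff]
      omega
    have hnotmem : (⟨s, hsM⟩ : Fin M) ∉
        Finset.univ.filter (fun r : Fin M => s + 1 ≤ (r : ℕ)) := by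
      simp
    rw [hins, Finset.prod_insert hnotmem]
    have hHins : (Finset.univ.filter fun q : Fin M => (q : ℕ) < s + 1).image f =
        insert (f ⟨s, hsM⟩) ((Finset.univ.filter fun q : Fin M => (q : ℕ) < s).image f) := by
      rw [← Finset.image_insert]
      congr 1
      ext q
      simp only [Finset.mem_filter, Finset.mem_univ, true_and, Finset.mem_insert, Fin.ext_iff]
      omega
    have hfs : f ⟨s, hsM⟩ ∉ (Finset.univ.filter fun q : Fin M => (q : ℕ) < s).image f := by
      intro hcon
      obtain ⟨q, hq, hq2⟩ := Finset.mem_image.1 hcon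
      have := hinj hq2
      simp only [Finset.mem_filter, Finset.mem_univ, true_and] at hq
      rw [this] at hq
      simp at hq
    have hpc : pcond x y ((Finset.univ.filter fun q : Fin M =>
          (q : ℕ) < ((⟨s, hsM⟩ : Fin M) : ℕ)).image f) (f ⟨s, hsM⟩) =
        (Nat.card {G : Finset (Fin n × Fin m) // BipDeg G x y ∧
            (Finset.univ.filter fun q : Fin M => (q : ℕ) < s + 1).image f ⊆ G} : ℝ) /
        (Nat.card {G : Finset (Fin n × Fin m) // BipDeg G x y ∧
            (Finset.univ.filter fun q : Fin M => (q : ℕ) < s).image f ⊆ G} : ℝ) := by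
      rw [pcond, if_neg hfs, hHins]
    rw [hpc]
    have hIH := ih (s + 1) (by omega)
    set N0 : ℝ := (Nat.card {G : Finset (Fin n × Fin m) // BipDeg G x y ∧
        (Finset.univ.filter fun q : Fin M => (q : ℕ) < s).image f ⊆ G} : ℝ) with hN0
    set N1 : ℝ := (Nat.card {G : Finset (Fin n × Fin m) // BipDeg G x y ∧
        (Finset.univ.filter fun q : Fin M => (q : ℕ) < s + 1).image f ⊆ G} : ℝ) with hN1
    set P : ℝ := ∏ r ∈ Finset.univ.filter (fun r : Fin M => s + 1 ≤ (r : ℕ)),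
        pcond x y ((Finset.univ.filter fun q : Fin M => (q : ℕ) < (r : ℕ)).image f) (f r)
      with hP
    have hN0ne : N0 ≠ 0 := by
      rw [hN0]
      exact_mod_cast Nat.pos_iff_ne_zero.1 (hpos s)
    calc N1 / N0 * P * N0 = P * N1 * (N0 / N0) := by ring
    _ = 1 := by rw [div_self hN0ne, mul_one, hIH]

end Aux

/-- For the sequential sampling algorithm, the conditional probability
of a complete sequence given its first `t` entries (steps `0,…,t-1`), when step `t`
processes vertex `v_i` at its `j`-th slot, equals
`1 / (N_t · (x_i - j + 1)! · ∏_{l > i} x_l!)` where `N_t` is the number of graphs with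
degree sequence `(x,y)` containing the first `t` edges.  In particular the output
distribution `π` is uniform on `S(x,y)`. -/
theorem sampling_conditional_probability (n m M : ℕ)
    (x : Fin n → ℕ) (y : Fin m → ℕ)
    (hx : ∑ i, x i = M) (hy : ∑ j, y j = M) (hM : 1 ≤ M)
    (hB : 0 < Nat.card {G : Finset (Fin n × Fin m) // BipDeg G x y})
    (f : Fin M → Fin n × Fin m) (hf : InS x y f)
    (t : ℕ) (i : Fin n) (j : ℕ) (hj1 : 1 ≤ j) (hjx : j ≤ x i)
    (ht : t = (j - 1) + ∑ l ∈ Finset.Iio i, x l) :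
    ((∏ r ∈ Finset.univ.filter (fun r : Fin M => t ≤ (r : ℕ)),
        pcond x y ((Finset.univ.filter fun q : Fin M => (q : ℕ) < (r : ℕ)).image f)
          (f r)) *
        (((x i - j + 1).factorial : ℝ))⁻¹ *
        (∏ l ∈ Finset.univ.filter fun l : Fin n => i < l, ((x l).factorial : ℝ))⁻¹
      = ((Nat.card {G : Finset (Fin n × Fin m) // BipDeg G x y ∧
            (Finset.univ.filter fun q : Fin M => (q : ℕ) < t).image f ⊆ G} : ℝ) *
          ((x i - j + 1).factorial : ℝ) *
          ∏ l ∈ Finset.univ.filter fun l : Fin n => i < l, ((x l).factorial : ℝ))⁻¹) ∧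
      ((∏ r : Fin M,
          pcond x y ((Finset.univ.filter fun q : Fin M => (q : ℕ) < (r : ℕ)).image f)
            (f r)) *
          (∏ l : Fin n, ((x l).factorial : ℝ))⁻¹
        = (Nat.card {g : Fin M → Fin n × Fin m // InS x y g} : ℝ)⁻¹) := by
  classical
  obtain ⟨G₀, hG₀, hbl⟩ := hf
  have hbl' : ∀ i : Fin n, G₀.filter (fun p => p.1 = i) = (Iblock (M := M) x i).image f := hbl
  -- `t ≤ M`
  have htM : t ≤ M := by
    have h1 : ∑ l ∈ Finset.Iic i, x l ≤ M := by
      rw [← hx]; exact Finset.sum_le_sum_of_subset (Finset.subset_univ _)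
    have h2 := sum_Iic x i
    omega
  constructor
  · -- first conjunct
    have htel := telescope x y hx f G₀ hG₀ hbl' (M - t) t (by omega)
    set N : ℝ := (Nat.card {G : Finset (Fin n × Fin m) // BipDeg G x y ∧
        (Finset.univ.filter fun q : Fin M => (q : ℕ) < t).image f ⊆ G} : ℝ) with hN
    have hP := eq_inv_of_mul_eq_one_left htel
    rw [hP, mul_inv, mul_inv]
  · -- second conjunct
    have hfilt : (Finset.univ.filter (fun r : Fin M => 0 ≤ (r : ℕ))) = Finset.univ :=
      Finset.filter_true_of_mem fun r _ => Nat.zero_le _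
    have htel := telescope x y hx f G₀ hG₀ hbl' M 0 (by omega)
    rw [hfilt] at htel
    have hP := eq_inv_of_mul_eq_one_left htel
    rw [hP]
    -- identify `N 0` with the number of graphs
    have hH0 : (Finset.univ.filter fun q : Fin M => (q : ℕ) < 0).image f = ∅ := by
      rw [Finset.filter_false_of_mem (fun q _ => by omega), Finset.image_empty]
    have hN0 : Nat.card {G : Finset (Fin n × Fin m) // BipDeg G x y ∧
        (Finset.univ.filter fun q : Fin M => (q : ℕ) < 0).image f ⊆ G} =
        Nat.card {G : Finset (Fin n × Fin m) // BipDeg G x y} := by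
      apply Nat.card_congr
      apply Equiv.subtypeEquivRight
      intro G
      rw [hH0]
      simp
    rw [hN0]
    -- the cardinality of S(x,y)
    have hScard : Nat.card {g : Fin M → Fin n × Fin m // InS x y g} =
        Nat.card {G : Finset (Fin n × Fin m) // BipDeg G x y} * ∏ l, (x l).factorial := by
      rw [Nat.card_eq_fintype_card, Fintype.card_subtype,
        Nat.card_eq_fintype_card, Fintype.card_subtype]
      rw [Finset.card_eq_sum_card_fiberwise
        (f := fun g : Fin M → Fin n × Fin m => Finset.univ.image g)
        (t := Finset.univ.filter fun G => BipDeg G x y)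
        (fun g hg => by
          simp only [Finset.mem_filter, Finset.mem_univ, true_and] at hg ⊢
          obtain ⟨G', hG', hbl''⟩ : InS x y g := by simpa using hg
          rw [image_univ_eq x hx g G' hbl'']
          simpa using hG')]
      rw [Finset.sum_congr rfl (fun G hG => ?_), Finset.sum_const, smul_eq_mul]
      · simp only [Finset.mem_filter, Finset.mem_univ, true_and] at hG
        -- the fiber over `G` has cardinality `∏ (x l)!`
        have hfib : ((Finset.univ.filter (InS x y)).filter
            (fun g : Fin M → Fin n × Fin m => Finset.univ.image g = G)) =
            Finset.univ.filter
              (fun g : Fin M → Fin n × Fin m =>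
                ∀ i : Fin n, (Iblock (M := M) x i).image g = G.filter (fun p => p.1 = i)) := by
          ext g
          simp only [Finset.mem_filter, Finset.mem_univ, true_and]
          constructor
          · rintro ⟨⟨G', hG', hbl''⟩, himg⟩
            have hGG' : G' = G := (image_univ_eq x hx g G' hbl'').symm.trans himg
            subst hGG'
            intro i
            exact (hbl'' i).symm
          · intro h
            have h' : ∀ i : Fin n, G.filter (fun p => p.1 = i) = (Iblock (M := M) x i).image g :=
              fun i => (h i).symm
            exact ⟨⟨G, hG, h'⟩, image_univ_eq x hx g G h'⟩
        rw [hfib]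
        have := aux_count (Iblock (M := M) x) (fun i => G.filter (fun p => p.1 = i))
          (blocks_cover x hx)
          (fun i => by rw [card_Iblock x hx i, hG.1 i])
        rw [Nat.card_eq_fintype_card, Fintype.card_subtype] at this
        rw [this]
        exact Finset.prod_congr rfl fun l _ => by rw [card_Iblock x hx l]
    rw [hScard, Nat.cast_mul, Nat.cast_prod, mul_inv]
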